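/- Let (X,d) be a compact metric space. For all ε > 0, the metric ε-dimension, the ε-width, and the topological dimension satisfy dim_ε(X,d) ≤ Widim_ε(X,d) ≤ 2 dim_ε(X,d) + 1, and dim_ε(X,d) ≤ dim(X). -/

import Mathlib

open scoped Classical

universe u

/-- A finite open cover of `Y`. -/
def IsFinOpenCover {Y : Type*} [TopologicalSpace Y] (α : Finset (Set Y)) : Prop :=
  (∀ U ∈ α, IsOpen U) ∧ ∀ y : Y, ∃ U ∈ α, y ∈ U

/-- Order of a finite cover. -/
noncomputable def coverOrd {Y : Type*} [TopologicalSpace Y] (α : Finset (Set Y)) : ℕ :=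
  sSup {c : ℕ | ∃ y : Y, (α.filter (fun U => y ∈ U)).card = c} - 1

/-- `β` refines `α`. -/
def Refines {Y : Type*} (β α : Finset (Set Y)) : Prop :=
  ∀ V ∈ β, ∃ U ∈ α, V ⊆ U

/-- `D(α)`: minimal order of a finite open cover refining `α`. -/
noncomputable def coverD {Y : Type*} [TopologicalSpace Y] (α : Finset (Set Y)) : ℕ :=
  sInf {c : ℕ | ∃ β : Finset (Set Y), IsFinOpenCover β ∧ Refines β α ∧ coverOrd β = c}

/-- Topological covering dimension `dim Y = sup_α D(α)`. -/
noncomputable def coverDim (Y : Type*) [TopologicalSpace Y] : ENNReal :=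
  ⨆ (α : Finset (Set Y)) (_ : IsFinOpenCover α), (coverD α : ENNReal)

/-- The metric `ε`-dimension: the infimum of `dim Y` over compact metrizable spaces `Y`
admitting a continuous `(d,ε)`-injective map `X → Y`. -/
noncomputable def dimEps (X : Type u) [MetricSpace X] (ε : ℝ) : ENNReal :=
  sInf {n : ENNReal | ∃ (Y : Type u) (_ : TopologicalSpace Y) (_ : CompactSpace Y)
    (_ : TopologicalSpace.MetrizableSpace Y) (f : X → Y), Continuous f ∧
    (∀ y : Y, Metric.diam (f ⁻¹' {y}) < ε) ∧ coverDim Y ≤ n}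

/-- The `ε`-width: the smallest `n` such that `X` admits a continuous `ε`-injective map
into an `n`-dimensional polyhedron (the space of a finite simplicial complex). -/
noncomputable def widimEps (X : Type u) [MetricSpace X] (ε : ℝ) : ENNReal :=
  sInf {n : ENNReal | ∃ (N : ℕ) (K : Geometry.SimplicialComplex ℝ (Fin N → ℝ)),
    K.faces.Finite ∧ coverDim ↥K.space ≤ n ∧
    ∃ f : X → ↥K.space, Continuous f ∧ ∀ p : ↥K.space, Metric.diam (f ⁻¹' {p}) < ε}

lemma refines_self {Y : Type*} (α : Finset (Set Y)) : Refines α α :=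
  fun V hV => ⟨V, hV, subset_rfl⟩

lemma coverD_set_nonempty {Y : Type*} [TopologicalSpace Y] {α : Finset (Set Y)}
    (hα : IsFinOpenCover α) :
    {c : ℕ | ∃ β : Finset (Set Y), IsFinOpenCover β ∧ Refines β α ∧ coverOrd β = c}.Nonempty :=
  ⟨coverOrd α, α, hα, refines_self α, rfl⟩

lemma coverOrd_le {Y : Type*} [TopologicalSpace Y] {β : Finset (Set Y)} {k : ℕ}
    (h : ∀ y : Y, (β.filter (fun U => y ∈ U)).card ≤ k + 1) : coverOrd β ≤ k := by
  have : sSup {c : ℕ | ∃ y : Y, (β.filter (fun U => y ∈ U)).card = c} ≤ k + 1 := by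
    apply csSup_le'
    rintro c ⟨y, rfl⟩
    exact h y
  unfold coverOrd
  omega

lemma card_filter_le_of_coverOrd {Y : Type*} [TopologicalSpace Y] {β : Finset (Set Y)} {k : ℕ}
    (h : coverOrd β ≤ k) (y : Y) : (β.filter (fun U => y ∈ U)).card ≤ k + 1 := by
  have hb : BddAbove {c : ℕ | ∃ y : Y, (β.filter (fun U => y ∈ U)).card = c} := by
    refine ⟨β.card, ?_⟩
    rintro c ⟨y, rfl⟩
    exact Finset.card_filter_le _ _
  have h1 : (β.filter (fun U => y ∈ U)).card ≤
      sSup {c : ℕ | ∃ y : Y, (β.filter (fun U => y ∈ U)).card = c} :=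
    le_csSup hb ⟨y, rfl⟩
  unfold coverOrd at h
  omega

lemma coverDim_le_of_forall_refinement {Y : Type*} [TopologicalSpace Y] {k : ℕ}
    (h : ∀ α : Finset (Set Y), IsFinOpenCover α → ∃ β, IsFinOpenCover β ∧ Refines β α ∧
      ∀ y : Y, (β.filter (fun U => y ∈ U)).card ≤ k + 1) :
    coverDim Y ≤ (k : ENNReal) := by
  refine iSup₂_le fun α hα => ?_
  obtain ⟨β, hβ, href, hcard⟩ := h α hα
  have : coverD α ≤ k :=
    le_trans (Nat.sInf_le ⟨β, hβ, href, rfl⟩) (coverOrd_le hcard)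
  exact_mod_cast this

lemma exists_refinement_of_coverDim_le {Y : Type*} [TopologicalSpace Y] {n : ℕ}
    (h : coverDim Y ≤ (n : ENNReal)) {α : Finset (Set Y)} (hα : IsFinOpenCover α) :
    ∃ β, IsFinOpenCover β ∧ Refines β α ∧
      ∀ y : Y, (β.filter (fun U => y ∈ U)).card ≤ n + 1 := by
  have hD : (coverD α : ENNReal) ≤ n := le_trans (le_iSup₂ (f := fun α _ => (coverD α : ENNReal)) α hα) h
  have hDn : coverD α ≤ n := by exact_mod_cast hD
  obtain ⟨β, hβ, href, hord⟩ := Nat.sInf_mem (coverD_set_nonempty hα)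
  exact ⟨β, hβ, href, fun y => card_filter_le_of_coverOrd (hord.le.trans hDn) y⟩

lemma coverDim_le_of_homeomorph {Y Z : Type*} [TopologicalSpace Y] [TopologicalSpace Z]
    (h : Y ≃ₜ Z) : coverDim Y ≤ coverDim Z := by
  refine iSup₂_le fun α hα => ?_
  set α' : Finset (Set Z) := α.image (fun U => h.symm ⁻¹' U) with hα'def
  have hα' : IsFinOpenCover α' := by
    constructor
    · intro U' hU'
      obtain ⟨U, hU, rfl⟩ := Finset.mem_image.1 hU'
      exact (hα.1 U hU).preimage h.symm.continuous
    · intro z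
      obtain ⟨U, hU, hz⟩ := hα.2 (h.symm z)
      exact ⟨_, Finset.mem_image_of_mem _ hU, hz⟩
  obtain ⟨β', hβ', href', hord'⟩ := Nat.sInf_mem (coverD_set_nonempty hα')
  set β : Finset (Set Y) := β'.image (fun V => h ⁻¹' V) with hβdef
  have hβ : IsFinOpenCover β := by
    constructor
    · intro V hV
      obtain ⟨V', hV', rfl⟩ := Finset.mem_image.1 hV
      exact (hβ'.1 V' hV').preimage h.continuous
    · intro y
      obtain ⟨V', hV', hy⟩ := hβ'.2 (h y)
      exact ⟨_, Finset.mem_image_of_mem _ hV', hy⟩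
  have href : Refines β α := by
    rintro V hV
    obtain ⟨V', hV', rfl⟩ := Finset.mem_image.1 hV
    obtain ⟨U', hU', hsub⟩ := href' V' hV'
    obtain ⟨U, hU, rfl⟩ := Finset.mem_image.1 hU'
    refine ⟨U, hU, ?_⟩
    intro y hy
    have := hsub hy
    simpa using this
  have hord : coverOrd β ≤ coverOrd β' := by
    unfold coverOrd
    have : sSup {c : ℕ | ∃ y : Y, (β.filter (fun U => y ∈ U)).card = c} ≤
        sSup {c : ℕ | ∃ z : Z, (β'.filter (fun U => z ∈ U)).card = c} := by
      apply csSup_le'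
      rintro c ⟨y, rfl⟩
      have hb : BddAbove {c : ℕ | ∃ z : Z, (β'.filter (fun U => z ∈ U)).card = c} := by
        refine ⟨β'.card, ?_⟩
        rintro c ⟨z, rfl⟩
        exact Finset.card_filter_le _ _
      refine le_trans ?_ (le_csSup hb ⟨h y, rfl⟩)
      have himg : β.filter (fun U => y ∈ U) ⊆
          (β'.filter (fun V' => h y ∈ V')).image (fun V => h ⁻¹' V) := by
        intro V hV
        rw [Finset.mem_filter] at hV
        obtain ⟨hVβ, hyV⟩ := hV
        obtain ⟨V', hV', rfl⟩ := Finset.mem_image.1 hVβ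
        exact Finset.mem_image_of_mem _ (Finset.mem_filter.2 ⟨hV', hyV⟩)
      calc (β.filter (fun U => y ∈ U)).card
          ≤ ((β'.filter (fun V' => h y ∈ V')).image (fun V => h ⁻¹' V)).card :=
            Finset.card_le_card himg
        _ ≤ (β'.filter (fun V' => h y ∈ V')).card := Finset.card_image_le
    omega
  have h1 : coverD α ≤ coverOrd β := Nat.sInf_le ⟨β, hβ, href, rfl⟩
  have h2 : coverD α ≤ coverD α' := h1.trans (hord.trans hord'.le)
  calc (coverD α : ENNReal) ≤ (coverD α' : ENNReal) := by exact_mod_cast h2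
    _ ≤ coverDim Z := le_iSup₂ (f := fun α _ => (coverD α : ENNReal)) α' hα'

section
variable {N : ℕ}

-- the shifted-cube covering of ℝ^N
noncomputable def brickC (L : ℝ) (i : Fin (N+1)) (k : Fin N → ℤ) : Set (Fin N → ℝ) :=
  {x | ∀ j, ((k j : ℝ) + (i : ℝ)/(N+1)) * L < x j ∧ x j < ((k j : ℝ) + 1 + (i : ℝ)/(N+1)) * L}

lemma brickC_isOpen (L : ℝ) (i : Fin (N+1)) (k : Fin N → ℤ) : IsOpen (brickC L i k) := by
  have : brickC L i k = ⋂ j, (fun x : Fin N → ℝ => x j) ⁻¹'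
      (Set.Ioo (((k j : ℝ) + (i : ℝ)/(N+1)) * L) (((k j : ℝ) + 1 + (i : ℝ)/(N+1)) * L)) := by
    ext x; simp [brickC, Set.mem_iInter]
  rw [this]
  exact isOpen_iInter_of_finite fun j => isOpen_Ioo.preimage (continuous_apply j)

lemma brick_exists_good_shift (L : ℝ) (x : Fin N → ℝ) :
    ∃ i : Fin (N+1), ∀ j, ¬ ∃ m : ℤ, (m : ℝ) = x j / L - (i : ℝ)/(N+1) := by
  by_contra hcon
  push_neg at hcon
  choose j m hm using hcon
  have hcard : Fintype.card (Fin N) < Fintype.card (Fin (N+1)) := by simp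
  obtain ⟨i, i', hne, hj⟩ := Fintype.exists_ne_map_eq_of_card_lt j hcard
  have hNpos : (0:ℝ) < (N:ℝ) + 1 := by positivity
  have h1 : (m i : ℝ) - m i' = (i' : ℝ)/(N+1) - (i : ℝ)/(N+1) := by
    have := hm i
    have h2 := hm i'
    rw [hj] at this
    linarith
  have h2 : ((m i - m i' : ℤ) : ℝ) * ((N:ℝ)+1) = (i' : ℝ) - i := by
    push_cast
    field_simp at h1 ⊢
    linarith
  have hii' : (i' : ℝ) - i ≠ 0 := by
    intro h
    apply hne
    have : (i : ℝ) = i' := by linarith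
    exact Fin.ext (by exact_mod_cast this)
  have hmne : m i - m i' ≠ 0 := by
    intro h
    rw [h] at h2
    simp at h2
    exact hii' (by linarith)
  have habs : (1:ℝ) ≤ |((m i - m i' : ℤ) : ℝ)| := by
    rw [← Int.cast_abs]
    exact_mod_cast Int.one_le_abs hmne
  have hb1 : |(i' : ℝ) - i| ≤ (N:ℝ) := by
    have hi : (i : ℝ) ≤ N := by exact_mod_cast Fin.is_le i
    have hi' : (i' : ℝ) ≤ N := by exact_mod_cast Fin.is_le i'
    have hi0 : (0:ℝ) ≤ i := by positivity
    have hi'0 : (0:ℝ) ≤ i' := by positivity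
    rw [abs_le]; constructor <;> linarith
  have : (N:ℝ) + 1 ≤ |(i' : ℝ) - i| := by
    rw [← h2, abs_mul, abs_of_pos hNpos]
    nlinarith
  linarith

lemma brick_mem_of_good (L : ℝ) (hL : 0 < L) (x : Fin N → ℝ) (i : Fin (N+1))
    (hi : ∀ j, ¬ ∃ m : ℤ, (m : ℝ) = x j / L - (i : ℝ)/(N+1)) :
    x ∈ brickC L i (fun j => ⌊x j / L - (i : ℝ)/(N+1)⌋) := by
  intro j
  have h1 : (⌊x j / L - (i : ℝ)/(N+1)⌋ : ℝ) < x j / L - (i : ℝ)/(N+1) := by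
    rcases lt_or_eq_of_le (Int.floor_le (x j / L - (i : ℝ)/(N+1))) with h | h
    · exact h
    · exact absurd ⟨_, h⟩ (hi j)
  have h2 : x j / L - (i : ℝ)/(N+1) < ⌊x j / L - (i : ℝ)/(N+1)⌋ + 1 :=
    Int.lt_floor_add_one _
  refine ⟨?_, ?_⟩
  · show ((⌊x j / L - (i : ℝ)/(N+1)⌋ : ℝ) + (i : ℝ)/(N+1)) * L < x j
    rw [← lt_div_iff₀ hL]
    linarith
  · show x j < ((⌊x j / L - (i : ℝ)/(N+1)⌋ : ℝ) + 1 + (i : ℝ)/(N+1)) * L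
    rw [← div_lt_iff₀ hL]
    linarith

lemma brick_k_unique (L : ℝ) (hL : 0 < L) (x : Fin N → ℝ) (i : Fin (N+1)) (k : Fin N → ℤ)
    (hx : x ∈ brickC L i k) : k = fun j => ⌊x j / L - (i : ℝ)/(N+1)⌋ := by
  funext j
  obtain ⟨h1, h2⟩ := hx j
  rw [← lt_div_iff₀ hL] at h1
  rw [← div_lt_iff₀ hL] at h2
  symm
  rw [Int.floor_eq_iff]
  constructor <;> [skip; push_cast] <;> [linarith; linarith]

lemma brick_dist_le {L : ℝ} (hL : 0 < L) {x y : Fin N → ℝ} {i : Fin (N+1)} {k : Fin N → ℤ}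
    (hx : x ∈ brickC L i k) (hy : y ∈ brickC L i k) : dist x y ≤ L := by
  rw [dist_pi_le_iff hL.le]
  intro j
  obtain ⟨hx1, hx2⟩ := hx j
  obtain ⟨hy1, hy2⟩ := hy j
  rw [Real.dist_eq, abs_le]
  constructor <;> nlinarith

end

lemma coverDim_compact_subset_le {N : ℕ} (P : Set (Fin N → ℝ)) (hP : IsCompact P) :
    coverDim ↥P ≤ (N : ENNReal) := by
  haveI : CompactSpace ↥P := isCompact_iff_compactSpace.1 hP
  apply coverDim_le_of_forall_refinement
  intro α hα
  -- Lebesgue number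
  have hcover : (Set.univ : Set ↥P) ⊆ ⋃ U : {U // U ∈ α}, (U : Set ↥P) := by
    intro y _
    obtain ⟨U, hU, hy⟩ := hα.2 y
    exact Set.mem_iUnion.2 ⟨⟨U, hU⟩, hy⟩
  obtain ⟨δ, hδ, hleb⟩ := lebesgue_number_lemma_of_metric isCompact_univ
    (fun U : {U // U ∈ α} => hα.1 U U.2) hcover
  set L : ℝ := δ/2 with hLdef
  have hL : 0 < L := by positivity
  have hLδ : L < δ := by rw [hLdef]; linarith
  -- bound on P
  obtain ⟨R, hR⟩ := hP.isBounded.subset_closedBall 0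
  set M : ℤ := ⌈R/L⌉ + 2 with hMdef
  set I : Finset (Fin (N+1) × (Fin N → ℤ)) :=
    Finset.univ ×ˢ Fintype.piFinset (fun _ => Finset.Icc (-M) M) with hIdef
  set I' : Finset (Fin (N+1) × (Fin N → ℤ)) :=
    I.filter (fun p => ∃ y : ↥P, (y : Fin N → ℝ) ∈ brickC L p.1 p.2) with hI'def
  set β : Finset (Set ↥P) :=
    I'.image (fun p => (Subtype.val : ↥P → Fin N → ℝ) ⁻¹' brickC L p.1 p.2) with hβdef
  have hσ01 : ∀ i : Fin (N+1), (0:ℝ) ≤ (i : ℝ)/(N+1) ∧ (i : ℝ)/(N+1) ≤ 1 := by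
    intro i
    constructor
    · positivity
    · rw [div_le_one (by positivity)]
      have : (i : ℝ) ≤ N := by exact_mod_cast Fin.is_le i
      linarith
  have hkbound : ∀ x ∈ P, ∀ (i : Fin (N+1)) (k : Fin N → ℤ), x ∈ brickC L i k →
      ∀ j, k j ∈ Finset.Icc (-M) M := by
    intro x hxP i k hx j
    obtain ⟨hσ0, hσ1⟩ := hσ01 i
    have hxj : |x j| ≤ R := by
      have h0 : dist x 0 ≤ R := by simpa [Metric.mem_closedBall] using hR hxP
      have := dist_le_pi_dist x 0 j
      simpa [Real.dist_eq] using this.trans h0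
    obtain ⟨hxlo, hxup⟩ := abs_le.1 hxj
    obtain ⟨h1, h2⟩ := hx j
    have hceil : (R/L : ℝ) ≤ (⌈R/L⌉ : ℝ) := Int.le_ceil _
    have hup : (k j : ℝ) < R / L := by
      rw [lt_div_iff₀ hL]
      nlinarith
    have hlo : -(R/L) - 2 < (k j : ℝ) := by
      have h3 : -R < ((k j : ℝ) + 2) * L := by nlinarith
      have h4 : -(R/L) < (k j : ℝ) + 2 := by
        rw [← neg_div, div_lt_iff₀ hL]
        exact h3
      linarith
    rw [Finset.mem_Icc]
    constructor
    · have : (-M : ℝ) < (k j : ℝ) := by push_cast [hMdef]; linarith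
      exact_mod_cast this.le
    · have : (k j : ℝ) < (M : ℝ) := by push_cast [hMdef]; linarith
      exact_mod_cast this.le
  refine ⟨β, ⟨?_, ?_⟩, ?_, ?_⟩
  · -- open
    intro V hV
    obtain ⟨p, _, rfl⟩ := Finset.mem_image.1 hV
    exact (brickC_isOpen L p.1 p.2).preimage continuous_subtype_val
  · -- covers
    intro y
    obtain ⟨i, hi⟩ := brick_exists_good_shift L (y : Fin N → ℝ)
    set k : Fin N → ℤ := fun j => ⌊(y : Fin N → ℝ) j / L - (i : ℝ)/(N+1)⌋ with hk
    have hmem : (y : Fin N → ℝ) ∈ brickC L i k := brick_mem_of_good L hL _ i hi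
    have hpI : (i, k) ∈ I := by
      rw [hIdef, Finset.mem_product]
      refine ⟨Finset.mem_univ _, ?_⟩
      rw [Fintype.mem_piFinset]
      exact fun j => hkbound _ y.2 i k hmem j
    have hpI' : (i, k) ∈ I' := Finset.mem_filter.2 ⟨hpI, y, hmem⟩
    exact ⟨_, Finset.mem_image_of_mem _ hpI', hmem⟩
  · -- refines
    intro V hV
    obtain ⟨p, hp, rfl⟩ := Finset.mem_image.1 hV
    obtain ⟨y0, hy0⟩ := (Finset.mem_filter.1 hp).2
    obtain ⟨U, hU⟩ := hleb y0 (Set.mem_univ _)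
    refine ⟨U, U.2, ?_⟩
    intro z hz
    apply hU
    rw [Metric.mem_ball, Subtype.dist_eq]
    exact lt_of_le_of_lt (brick_dist_le hL hz hy0) hLδ
  · -- order
    intro y
    have hsub : β.filter (fun U => y ∈ U) ⊆
        (I'.filter (fun p => (y : Fin N → ℝ) ∈ brickC L p.1 p.2)).image
          (fun p => (Subtype.val : ↥P → Fin N → ℝ) ⁻¹' brickC L p.1 p.2) := by
      intro V hV
      rw [Finset.mem_filter] at hV
      obtain ⟨hVβ, hyV⟩ := hV
      obtain ⟨p, hp, rfl⟩ := Finset.mem_image.1 hVβ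
      exact Finset.mem_image_of_mem _ (Finset.mem_filter.2 ⟨hp, hyV⟩)
    calc (β.filter (fun U => y ∈ U)).card
        ≤ ((I'.filter (fun p => (y : Fin N → ℝ) ∈ brickC L p.1 p.2)).image
          (fun p => (Subtype.val : ↥P → Fin N → ℝ) ⁻¹' brickC L p.1 p.2)).card :=
          Finset.card_le_card hsub
      _ ≤ (I'.filter (fun p => (y : Fin N → ℝ) ∈ brickC L p.1 p.2)).card :=
          Finset.card_image_le
      _ ≤ (Finset.univ : Finset (Fin (N+1))).card := by
          apply Finset.card_le_card_of_injOn Prod.fst (fun _ _ => Finset.mem_univ _)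
          intro p hp q hq hfst
          rw [Finset.mem_coe, Finset.mem_filter] at hp hq
          have hkp := brick_k_unique L hL _ p.1 p.2 hp.2
          have hkq := brick_k_unique L hL _ q.1 q.2 hq.2
          rw [← hfst] at hkq
          exact Prod.ext hfst (hkp.trans hkq.symm)
      _ = N + 1 := by simp


noncomputable def momentMap {N : ℕ} {ι : Type*} (t : ι → ℝ) (j : ι) : Fin N → ℝ :=
  fun i => t j ^ ((i : ℕ) + 1)

lemma momentMap_injective {N : ℕ} {ι : Type*} (hN : 0 < N) {t : ι → ℝ}
    (ht : Function.Injective t) : Function.Injective (momentMap (N := N) t) := by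
  intro a b hab
  apply ht
  have := congrFun hab ⟨0, hN⟩
  simpa [momentMap] using this

lemma momentFamilyAffineIndep {N : ℕ} {ι : Type*} {t : ι → ℝ}
    (ht : Function.Injective t) (T : Finset ι) (hcard : T.card ≤ N + 1) :
    AffineIndependent ℝ (fun j : ↥T => momentMap (N := N) t (j : ι)) := by
  rw [affineIndependent_iff]
  intro s' w hsum hcomb e0 he0
  set τ : ↥T → ℝ := fun e => t (e : ι) with hτ
  have hτinj : Function.Injective τ := fun a b hab => Subtype.ext (ht hab)
  set q : Polynomial ℝ := ∏ e ∈ s'.erase e0, (Polynomial.X - Polynomial.C (τ e)) with hq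
  have hdeg : q.natDegree ≤ N := by
    have h1 : q.natDegree = (s'.erase e0).card := by
      rw [hq, Polynomial.natDegree_prod_of_monic]
      · simp
      · intro e _
        exact Polynomial.monic_X_sub_C _
    have h2 : s'.card ≤ T.card := by
      have := Finset.card_le_univ s'
      simpa [Fintype.card_coe] using this
    have h3 : (s'.erase e0).card = s'.card - 1 := Finset.card_erase_of_mem he0
    have h4 : 1 ≤ s'.card := Finset.card_pos.2 ⟨e0, he0⟩
    omega
  have hpow : ∀ d ≤ N, ∑ e ∈ s', w e * τ e ^ d = 0 := by
    intro d hd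
    rcases Nat.eq_zero_or_pos d with rfl | hdpos
    · simpa using hsum
    · have hlt : d - 1 < N := by omega
      have := congrFun hcomb ⟨d - 1, hlt⟩
      have h5 : ((∑ e ∈ s', w e • momentMap (N := N) t (e : ι)) ⟨d - 1, hlt⟩ : ℝ) = 0 := by
        rw [hcomb]; rfl
      rw [Finset.sum_apply] at h5
      have h6 : ∀ e ∈ s', (w e • momentMap (N := N) t (e : ι)) ⟨d-1, hlt⟩ = w e * τ e ^ d := by
        intro e _
        simp only [Pi.smul_apply, momentMap, smul_eq_mul]
        congr 2
        omega
      rw [Finset.sum_congr rfl h6] at h5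
      exact h5
  have heval : ∑ e ∈ s', w e * q.eval (τ e) = 0 := by
    have hev : ∀ x : ℝ, q.eval x = ∑ d ∈ Finset.range (N+1), q.coeff d * x ^ d := by
      intro x
      exact Polynomial.eval_eq_sum_range' (by omega) x
    calc ∑ e ∈ s', w e * q.eval (τ e)
        = ∑ e ∈ s', ∑ d ∈ Finset.range (N+1), q.coeff d * (w e * τ e ^ d) := by
          apply Finset.sum_congr rfl
          intro e _
          rw [hev]
          rw [Finset.mul_sum]
          apply Finset.sum_congr rfl
          intro d _
          ring
      _ = ∑ d ∈ Finset.range (N+1), q.coeff d * ∑ e ∈ s', w e * τ e ^ d := by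
          rw [Finset.sum_comm]
          apply Finset.sum_congr rfl
          intro d _
          rw [Finset.mul_sum]
      _ = 0 := by
          apply Finset.sum_eq_zero
          intro d hd
          rw [hpow d (by simpa using Nat.lt_succ_iff.1 (Finset.mem_range.1 hd)), mul_zero]
  have hzero : ∀ e ∈ s'.erase e0, w e * q.eval (τ e) = 0 := by
    intro e he
    have : q.eval (τ e) = 0 := by
      rw [hq, Polynomial.eval_prod]
      apply Finset.prod_eq_zero he
      simp
    rw [this, mul_zero]
  have hsingle : ∑ e ∈ s', w e * q.eval (τ e) = w e0 * q.eval (τ e0) := by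
    apply Finset.sum_eq_single_of_mem e0 he0
    intro e he hne
    exact hzero e (Finset.mem_erase.2 ⟨hne, he⟩)
  have hne : q.eval (τ e0) ≠ 0 := by
    rw [hq, Polynomial.eval_prod]
    rw [Finset.prod_ne_zero_iff]
    intro e he
    simp only [Polynomial.eval_sub, Polynomial.eval_X, Polynomial.eval_C, sub_ne_zero]
    intro h
    exact (Finset.mem_erase.1 he).1 (hτinj h.symm)
  have : w e0 * q.eval (τ e0) = 0 := by rw [← hsingle]; exact heval
  exact (mul_eq_zero.1 this).resolve_right hne

lemma momentSetAffineIndep {N : ℕ} {ι : Type*} (hN : 0 < N) {t : ι → ℝ}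
    (ht : Function.Injective t) (T : Finset ι) (hcard : T.card ≤ N + 1) :
    AffineIndependent ℝ ((↑) : ↥(T.image (momentMap (N := N) t)) → (Fin N → ℝ)) := by
  have hv := momentMap_injective hN ht
  have hbij : Function.Bijective (fun j : ↥T =>
      (⟨momentMap (N := N) t (j : ι), Finset.mem_image_of_mem _ j.2⟩ :
        ↥(T.image (momentMap (N := N) t)))) := by
    constructor
    · intro a b hab
      exact Subtype.ext (hv (congrArg Subtype.val hab))
    · rintro ⟨u, hu⟩
      obtain ⟨j, hj, rfl⟩ := Finset.mem_image.1 hu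
      exact ⟨⟨j, hj⟩, rfl⟩
  set e := Equiv.ofBijective _ hbij with he
  rw [← affineIndependent_equiv e]
  have : ((↑) : ↥(T.image (momentMap (N := N) t)) → (Fin N → ℝ)) ∘ e =
      fun j : ↥T => momentMap (N := N) t (j : ι) := rfl
  rw [this]
  exact momentFamilyAffineIndep ht T hcard


lemma exists_small_ball_preimage {X Y : Type*} [MetricSpace X] [CompactSpace X]
    [MetricSpace Y] {f : X → Y} (hf : Continuous f) {ε : ℝ} (hε : 0 < ε)
    (hd : ∀ y : Y, Metric.diam (f ⁻¹' {y}) < ε) (y : Y) :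
    ∃ δ > 0, Metric.diam (f ⁻¹' Metric.ball y δ) < ε := by
  by_contra hcon
  push_neg at hcon
  set ε' : ℝ := (Metric.diam (f ⁻¹' {y}) + ε) / 2 with hε'
  have hd0 : 0 ≤ Metric.diam (f ⁻¹' {y}) := Metric.diam_nonneg
  have hε'lt : ε' < ε := by rw [hε']; linarith [hd y]
  have hε'gt : Metric.diam (f ⁻¹' {y}) < ε' := by rw [hε']; linarith [hd y]
  have hε'pos : 0 < ε' := by rw [hε']; linarith
  have hpair : ∀ n : ℕ, ∃ x x' : X,
      f x ∈ Metric.ball y (1/(n+1)) ∧ f x' ∈ Metric.ball y (1/(n+1)) ∧ ε' < dist x x' := by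
    intro n
    have h1 : (0:ℝ) < 1/(n+1) := by positivity
    have h2 := hcon (1/(n+1)) h1
    by_contra hcc
    push_neg at hcc
    have : Metric.diam (f ⁻¹' Metric.ball y (1/(n+1))) ≤ ε' := by
      apply Metric.diam_le_of_forall_dist_le hε'pos.le
      intro a ha b hb
      exact hcc a b ha hb
    linarith
  choose u u' hu hu' huu' using hpair
  obtain ⟨a, -, φ, hφ, ha⟩ := isCompact_univ.tendsto_subseq (x := u) (fun n => Set.mem_univ _)
  obtain ⟨a', -, ψ, hψ, ha'⟩ := isCompact_univ.tendsto_subseq (x := u' ∘ φ)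
    (fun n => Set.mem_univ _)
  have haconv : Filter.Tendsto (fun n => u (φ (ψ n))) Filter.atTop (nhds a) :=
    ha.comp hψ.tendsto_atTop
  have ha'conv : Filter.Tendsto (fun n => u' (φ (ψ n))) Filter.atTop (nhds a') := ha'
  have hgrow : ∀ n : ℕ, n ≤ φ (ψ n) := fun n => (hψ.id_le n).trans (hφ.id_le _)
  have hdist0 : ∀ v : ℕ → X, (∀ n : ℕ, f (v n) ∈ Metric.ball y (1/((n:ℝ)+1))) →
      Filter.Tendsto (fun n => f (v (φ (ψ n)))) Filter.atTop (nhds y) := by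
    intro v hv
    rw [tendsto_iff_dist_tendsto_zero]
    have hle : ∀ n : ℕ, dist (f (v (φ (ψ n)))) y ≤ 1/((n:ℝ)+1) := by
      intro n
      have h1 := hv (φ (ψ n))
      rw [Metric.mem_ball] at h1
      have h2 : (1:ℝ)/((φ (ψ n) : ℝ)+1) ≤ 1/((n:ℝ)+1) := by
        have h3 : (n:ℝ) ≤ (φ (ψ n) : ℝ) := by exact_mod_cast hgrow n
        apply div_le_div_of_nonneg_left (by norm_num) (by positivity)
        linarith
      linarith
    exact squeeze_zero (fun n => dist_nonneg) hle tendsto_one_div_add_atTop_nhds_zero_nat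
  have hfa : f a = y := by
    have h1 : Filter.Tendsto (fun n => f (u (φ (ψ n)))) Filter.atTop (nhds (f a)) :=
      (hf.tendsto a).comp haconv
    exact tendsto_nhds_unique h1 (hdist0 u hu)
  have hfa' : f a' = y := by
    have h1 : Filter.Tendsto (fun n => f (u' (φ (ψ n)))) Filter.atTop (nhds (f a')) :=
      (hf.tendsto a').comp ha'conv
    exact tendsto_nhds_unique h1 (hdist0 u' hu')
  have hdaa' : ε' ≤ dist a a' := by
    have h1 : Filter.Tendsto (fun n => dist (u (φ (ψ n))) (u' (φ (ψ n))))
        Filter.atTop (nhds (dist a a')) := haconv.dist ha'conv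
    apply ge_of_tendsto h1
    filter_upwards with n
    exact (huu' (φ (ψ n))).le
  have hbdd : Bornology.IsBounded (f ⁻¹' {y}) :=
    (isCompact_univ.isBounded).subset (Set.subset_univ _)
  have : dist a a' ≤ Metric.diam (f ⁻¹' {y}) := by
    apply Metric.dist_le_diam_of_mem hbdd
    · simp [hfa]
    · simp [hfa']
  linarith

lemma exists_finCover_small_preimages {X Y : Type*} [MetricSpace X] [CompactSpace X]
    [MetricSpace Y] [CompactSpace Y] {f : X → Y} (hf : Continuous f) {ε : ℝ} (hε : 0 < ε)
    (hd : ∀ y : Y, Metric.diam (f ⁻¹' {y}) < ε) :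
    ∃ α : Finset (Set Y), ((∀ U ∈ α, IsOpen U) ∧ ∀ y : Y, ∃ U ∈ α, y ∈ U) ∧
      ∀ U ∈ α, Metric.diam (f ⁻¹' U) < ε := by
  choose δ hδ hdiam using exists_small_ball_preimage hf hε hd
  obtain ⟨t, ht⟩ := isCompact_univ.elim_finite_subcover (fun y : Y => Metric.ball y (δ y))
    (fun y => Metric.isOpen_ball) (by
      intro y _
      exact Set.mem_iUnion.2 ⟨y, Metric.mem_ball_self (hδ y)⟩)
  refine ⟨t.image (fun y => Metric.ball y (δ y)), ⟨?_, ?_⟩, ?_⟩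
  · intro U hU
    obtain ⟨y, _, rfl⟩ := Finset.mem_image.1 hU
    exact Metric.isOpen_ball
  · intro y
    have := ht (Set.mem_univ y)
    rw [Set.mem_iUnion₂] at this
    obtain ⟨z, hz, hyz⟩ := this
    exact ⟨_, Finset.mem_image_of_mem _ hz, hyz⟩
  · intro U hU
    obtain ⟨z, _, rfl⟩ := Finset.mem_image.1 hU
    exact hdiam z

section Nerve

variable {X : Type u} [MetricSpace X] [CompactSpace X]

lemma nerve_construction {Y : Type*} [MetricSpace Y] [CompactSpace Y] [Nonempty X]
    {f : X → Y} (hf : Continuous f) {ε : ℝ} (hε : 0 < ε)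
    (hdiam : ∀ y : Y, Metric.diam (f ⁻¹' {y}) < ε) (n : ℕ)
    (hdim : coverDim Y ≤ (n : ENNReal)) :
    ∃ K : Geometry.SimplicialComplex ℝ (Fin (2*n+1) → ℝ), K.faces.Finite ∧
      coverDim ↥K.space ≤ ((2*n+1 : ℕ) : ENNReal) ∧
      ∃ g : X → ↥K.space, Continuous g ∧ ∀ p : ↥K.space, Metric.diam (g ⁻¹' {p}) < ε := by
  haveI : Nonempty Y := Nonempty.map f ‹_›
  set N : ℕ := 2*n+1 with hNdef
  have hN : 0 < N := by omega
  obtain ⟨α, hα, hsmall⟩ := exists_finCover_small_preimages hf hε hdiam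
  obtain ⟨β, hβ, href, hβcard⟩ := exists_refinement_of_coverDim_le hdim (α := α) hα
  set ι := {V // V ∈ β} with hιdef
  set t : ι → ℝ := fun j => ((Fintype.equivFin ι j : ℕ) : ℝ) with htdef
  have htinj : Function.Injective t := by
    intro a b hab
    simp only [htdef] at hab
    have h2 : ((Fintype.equivFin ι a : ℕ)) = ((Fintype.equivFin ι b : ℕ)) := by exact_mod_cast hab
    exact (Fintype.equivFin ι).injective (Fin.ext h2)
  set v : ι → (Fin N → ℝ) := momentMap t with hvdef
  -- partition of unity
  set ψ : ι → Y → ℝ := fun j y =>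
    if ((j : Set Y))ᶜ = ∅ then 1 else Metric.infDist y ((j : Set Y))ᶜ with hψdef
  have hψcont : ∀ j, Continuous (ψ j) := by
    intro j
    by_cases h : ((j : Set Y))ᶜ = ∅
    · have he : ψ j = fun _ => (1:ℝ) := by funext y; simp only [hψdef]; rw [if_pos h]
      rw [he]; exact continuous_const
    · have he : ψ j = fun y => Metric.infDist y ((j : Set Y))ᶜ := by
        funext y; simp only [hψdef]; rw [if_neg h]
      rw [he]; exact Metric.continuous_infDist_pt _
  have hψnn : ∀ j y, 0 ≤ ψ j y := by
    intro j y
    by_cases h : ((j : Set Y))ᶜ = ∅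
    · show (0:ℝ) ≤ if ((j : Set Y))ᶜ = ∅ then 1 else Metric.infDist y ((j : Set Y))ᶜ
      rw [if_pos h]; norm_num
    · show (0:ℝ) ≤ if ((j : Set Y))ᶜ = ∅ then 1 else Metric.infDist y ((j : Set Y))ᶜ
      rw [if_neg h]; exact Metric.infDist_nonneg
  have hψpos : ∀ (j : ι) (y : Y), y ∈ (j : Set Y) → 0 < ψ j y := by
    intro j y hy
    show (0:ℝ) < if ((j : Set Y))ᶜ = ∅ then 1 else Metric.infDist y ((j : Set Y))ᶜ
    by_cases h : ((j : Set Y))ᶜ = ∅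
    · rw [if_pos h]; norm_num
    · rw [if_neg h]
      replace h : ((j : Set Y))ᶜ.Nonempty := Set.nonempty_iff_ne_empty.2 h
      have hcl : IsClosed ((j : Set Y))ᶜ := (hβ.1 _ j.2).isClosed_compl
      rw [← hcl.notMem_iff_infDist_pos h]
      simpa using hy
  have hψzero : ∀ (j : ι) (y : Y), y ∉ (j : Set Y) → ψ j y = 0 := by
    intro j y hy
    show (if ((j : Set Y))ᶜ = ∅ then 1 else Metric.infDist y ((j : Set Y))ᶜ) = 0
    have h : ((j : Set Y))ᶜ ≠ ∅ := by
      rw [← Set.nonempty_iff_ne_empty]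
      exact ⟨y, hy⟩
    rw [if_neg h]
    exact Metric.infDist_zero_of_mem hy
  set σs : Y → ℝ := fun y => ∑ j : ι, ψ j y with hσdef
  have hσcont : Continuous σs := continuous_finset_sum _ (fun j _ => hψcont j)
  have hσpos : ∀ y, 0 < σs y := by
    intro y
    obtain ⟨U, hU, hyU⟩ := hβ.2 y
    apply Finset.sum_pos' (fun j _ => hψnn j y)
    exact ⟨⟨U, hU⟩, Finset.mem_univ _, hψpos ⟨U, hU⟩ y hyU⟩
  set φ : ι → Y → ℝ := fun j y => ψ j y / σs y with hφdef
  have hφnn : ∀ j y, 0 ≤ φ j y := fun j y => div_nonneg (hψnn j y) (hσpos y).le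
  have hφsum : ∀ y, ∑ j : ι, φ j y = 1 := by
    intro y
    rw [hφdef, ← Finset.sum_div]
    exact div_self (hσpos y).ne'
  have hφpos : ∀ (j : ι) (y : Y), y ∈ (j : Set Y) → 0 < φ j y := fun j y hy =>
    div_pos (hψpos j y hy) (hσpos y)
  have hφzero : ∀ (j : ι) (y : Y), y ∉ (j : Set Y) → φ j y = 0 := by
    intro j y hy
    rw [hφdef]
    simp [hψzero j y hy]
  have hφmem : ∀ (j : ι) (y : Y), 0 < φ j y → y ∈ (j : Set Y) := by
    intro j y h
    by_contra hy
    rw [hφzero j y hy] at h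
    exact lt_irrefl _ h
  set T : Y → Finset ι := fun y => Finset.univ.filter (fun j => y ∈ (j : Set Y)) with hTdef
  have hTne : ∀ y, (T y).Nonempty := by
    intro y
    obtain ⟨U, hU, hyU⟩ := hβ.2 y
    exact ⟨⟨U, hU⟩, Finset.mem_filter.2 ⟨Finset.mem_univ _, hyU⟩⟩
  have hTcard : ∀ y, (T y).card ≤ n + 1 := by
    intro y
    refine le_trans (Finset.card_le_card_of_injOn (fun j => (j : Set Y)) ?_ ?_) (hβcard y)
    · intro j hj
      rw [hTdef, Finset.mem_coe, Finset.mem_filter] at hj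
      exact Finset.mem_filter.2 ⟨j.2, hj.2⟩
    · intro a _ b _ hab
      exact Subtype.ext hab
  have hTmem : ∀ y j, j ∈ T y ↔ y ∈ (j : Set Y) := by
    intro y j
    rw [hTdef]
    simp
  -- the nerve complex
  have hvinj : Function.Injective v := momentMap_injective hN htinj
  have hfacecard : ∀ (Tf : Finset ι) (y : Y), (∀ j ∈ Tf, y ∈ (j : Set Y)) → Tf.card ≤ n+1 := by
    intro Tf y hy
    refine le_trans (Finset.card_le_card ?_) (hTcard y)
    intro j hj
    exact (hTmem y j).2 (hy j hj)
  set K : Geometry.SimplicialComplex ℝ (Fin N → ℝ) :=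
    { faces := {s | ∃ Tf : Finset ι, Tf.Nonempty ∧ (∃ y : Y, ∀ j ∈ Tf, y ∈ (j : Set Y)) ∧
        s = Tf.image v}
      indep := by
        rintro s ⟨Tf, hne, ⟨y, hy⟩, rfl⟩
        exact momentSetAffineIndep hN htinj Tf (by have := hfacecard Tf y hy; omega)
      isRelLowerSet_faces := by
        have not_empty_mem : (∅ : Finset (Fin N → ℝ)) ∉ {s : Finset (Fin N → ℝ) | ∃ Tf : Finset ι, Tf.Nonempty ∧ (∃ y : Y, ∀ j ∈ Tf, y ∈ (j : Set Y)) ∧ s = Tf.image v} := by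
          rintro ⟨Tf, hTfne, -, h⟩
          exact absurd h.symm (Finset.nonempty_iff_ne_empty.1 (hTfne.image v))
        have down_closed : ∀ {s u : Finset (Fin N → ℝ)}, s ∈ {s : Finset (Fin N → ℝ) | ∃ Tf : Finset ι, Tf.Nonempty ∧ (∃ y : Y, ∀ j ∈ Tf, y ∈ (j : Set Y)) ∧ s = Tf.image v} → u ⊆ s → u ≠ ∅ → u ∈ {s : Finset (Fin N → ℝ) | ∃ Tf : Finset ι, Tf.Nonempty ∧ (∃ y : Y, ∀ j ∈ Tf, y ∈ (j : Set Y)) ∧ s = Tf.image v} := by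
          rintro s u ⟨Tf, hne, ⟨y, hy⟩, rfl⟩ hts htne
          refine ⟨Tf.filter (fun j => v j ∈ u), ?_, ⟨y, ?_⟩, ?_⟩
          · obtain ⟨x, hx⟩ := Finset.nonempty_iff_ne_empty.2 htne
            obtain ⟨j, hj, rfl⟩ := Finset.mem_image.1 (hts hx)
            exact ⟨j, Finset.mem_filter.2 ⟨hj, hx⟩⟩
          · intro j hj
            exact hy j (Finset.mem_filter.1 hj).1
          · ext w
            simp only [Finset.mem_image, Finset.mem_filter]
            constructor
            · intro hw
              obtain ⟨j, hj, rfl⟩ := Finset.mem_image.1 (hts hw)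
              exact ⟨j, ⟨hj, hw⟩, rfl⟩
            · rintro ⟨j, ⟨hj, hw⟩, rfl⟩
              exact hw
        intro s hs
        exact ⟨Finset.nonempty_iff_ne_empty.2 (fun h => not_empty_mem (h ▸ hs)),
          fun u hts htne => down_closed hs hts htne.ne_empty⟩
      inter_subset_convexHull := by
        rintro s u ⟨T1, h1ne, ⟨y1, hy1⟩, rfl⟩ ⟨T2, h2ne, ⟨y2, hy2⟩, rfl⟩
        have hcard : (T1 ∪ T2).card ≤ N + 1 := by
          have h1 := hfacecard T1 y1 hy1
          have h2 := hfacecard T2 y2 hy2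
          have h3 := Finset.card_union_le T1 T2
          omega
        have hAI := momentSetAffineIndep hN htinj (T1 ∪ T2) hcard
        have h1 : T1.image v ⊆ (T1 ∪ T2).image v :=
          Finset.image_subset_image Finset.subset_union_left
        have h2 : T2.image v ⊆ (T1 ∪ T2).image v :=
          Finset.image_subset_image Finset.subset_union_right
        exact (hAI.convexHull_inter h1 h2).superset } with hKdef
  have hKfaces : ∀ s, s ∈ K.faces ↔ ∃ Tf : Finset ι, Tf.Nonempty ∧
      (∃ y : Y, ∀ j ∈ Tf, y ∈ (j : Set Y)) ∧ s = Tf.image v := fun s => Iff.rfl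
  have hKfin : K.faces.Finite := by
    apply Set.Finite.subset (Set.finite_range (fun Tf : Finset ι => Tf.image v))
    rintro s ⟨Tf, -, -, rfl⟩
    exact Set.mem_range_self Tf
  set g0 : X → (Fin N → ℝ) := fun x => ∑ j : ι, φ j (f x) • v j with hg0def
  have hg0cont : Continuous g0 := by
    apply continuous_finset_sum
    intro j _
    have h1 : Continuous fun x => φ j (f x) :=
      ((hψcont j).comp hf).div (hσcont.comp hf) (fun x => (hσpos (f x)).ne')
    exact h1.smul continuous_const
  have hvanish : ∀ (z : Y) (j : ι), j ∉ T z → φ j z = 0 := by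
    intro z j hj
    exact hφzero j z (fun hy => hj ((hTmem z j).2 hy))
  have hsum_T : ∀ z : Y, ∑ j ∈ T z, φ j z • v j = ∑ j : ι, φ j z • v j := by
    intro z
    apply Finset.sum_subset (Finset.subset_univ _)
    intro j _ hj
    rw [hvanish z j hj, zero_smul]
  have hsum_T1 : ∀ z : Y, ∑ j ∈ T z, φ j z = 1 := by
    intro z
    rw [Finset.sum_subset (Finset.subset_univ (T z))
      (fun j _ hj => hvanish z j hj)]
    exact hφsum z
  have hg0mem : ∀ x, g0 x ∈ K.space := by
    intro x
    have hface : (T (f x)).image v ∈ K.faces :=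
      ⟨T (f x), hTne (f x), ⟨f x, fun j hj => (hTmem (f x) j).1 hj⟩, rfl⟩
    apply Geometry.SimplicialComplex.convexHull_subset_space hface
    have hw1 : ∑ j ∈ T (f x), φ j (f x) = 1 := hsum_T1 (f x)
    have hmem := Finset.centerMass_mem_convexHull (T (f x))
      (w := fun j => φ j (f x)) (fun j _ => hφnn j (f x)) (by rw [hw1]; norm_num)
      (z := v) (fun j hj => Finset.mem_coe.2 (Finset.mem_image_of_mem v hj))
    rw [Finset.centerMass_eq_of_sum_1 _ _ hw1] at hmem
    have hgeq : g0 x = ∑ j ∈ T (f x), φ j (f x) • v j := (hsum_T (f x)).symm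
    rw [hgeq]
    exact hmem
  set g : X → ↥K.space := fun x => ⟨g0 x, hg0mem x⟩ with hgdef
  refine ⟨K, hKfin, ?_, g, hg0cont.subtype_mk _, ?_⟩
  · -- coverDim of the polyhedron
    have hcomp : IsCompact K.space := by
      apply Set.Finite.isCompact_biUnion hKfin
      intro s _
      exact (Finset.finite_toSet s).isCompact_convexHull ℝ
    exact coverDim_compact_subset_le _ hcomp
  · -- ε-injectivity
    intro p
    rcases Set.eq_empty_or_nonempty (g ⁻¹' {p}) with hemp | ⟨x0, hx0⟩
    · rw [hemp]
      simpa using hε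
    · have hx0p : g x0 = p := hx0
      obtain ⟨j0, hj0⟩ := hTne (f x0)
      obtain ⟨U, hU, hsubU⟩ := href (j0 : Set Y) j0.2
      have hkey : g ⁻¹' {p} ⊆ f ⁻¹' U := by
        intro x' hx'
        have hgx' : g0 x' = g0 x0 := by
          have h1 : g x' = p := hx'
          exact congrArg Subtype.val (h1.trans hx0p.symm)
        set Uu : Finset ι := T (f x0) ∪ T (f x') with hUudef
        have hUucard : Uu.card ≤ N + 1 := by
          have h1 := hTcard (f x0)
          have h2 := hTcard (f x')
          have h3 := Finset.card_union_le (T (f x0)) (T (f x'))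
          rw [hUudef]
          omega
        have hAI := momentFamilyAffineIndep htinj Uu hUucard
        have hextv : ∀ z : Y, T z ⊆ Uu → ∑ j ∈ Uu, φ j z • v j = ∑ j : ι, φ j z • v j := by
          intro z hz
          apply Finset.sum_subset (Finset.subset_univ _)
          intro j _ hj
          rw [hvanish z j (fun hmem => hj (hz hmem)), zero_smul]
        have hext1 : ∀ z : Y, T z ⊆ Uu → ∑ j ∈ Uu, φ j z = 1 := by
          intro z hz
          rw [Finset.sum_subset (Finset.subset_univ Uu)
            (fun j _ hj => hvanish z j (fun hmem => hj (hz hmem)))]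
          exact hφsum z
        have hT0sub : T (f x0) ⊆ Uu := Finset.subset_union_left
        have hT'sub : T (f x') ⊆ Uu := Finset.subset_union_right
        have heq := hAI.eq_of_sum_eq_sum (s := (Finset.univ : Finset ↥Uu))
          (w₁ := fun j => φ (↑j) (f x')) (w₂ := fun j => φ (↑j) (f x0))
          (by
            rw [Finset.sum_coe_sort Uu (fun j => φ j (f x')),
              Finset.sum_coe_sort Uu (fun j => φ j (f x0)),
              hext1 _ hT'sub, hext1 _ hT0sub])
          (by
            rw [Finset.sum_coe_sort Uu (fun j => φ j (f x') • v j),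
              Finset.sum_coe_sort Uu (fun j => φ j (f x0) • v j),
              hextv _ hT'sub, hextv _ hT0sub]
            exact hgx')
        have hj0Uu : (⟨j0, hT0sub hj0⟩ : ↥Uu) ∈ (Finset.univ : Finset ↥Uu) :=
          Finset.mem_univ _
        have hphieq : φ j0 (f x') = φ j0 (f x0) := heq _ hj0Uu
        have hpos0 : 0 < φ j0 (f x0) := hφpos j0 (f x0) ((hTmem _ _).1 hj0)
        have hpos' : 0 < φ j0 (f x') := by
          rw [hphieq]
          exact hpos0
        exact hsubU (hφmem j0 (f x') hpos')
      calc Metric.diam (g ⁻¹' {p}) ≤ Metric.diam (f ⁻¹' U) :=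
            Metric.diam_mono hkey ((isCompact_univ.isBounded).subset (Set.subset_univ _))
        _ < ε := hsmall U hU

end Nerve

/-- trivial one-point simplicial complex in `Fin 1 → ℝ` -/
noncomputable def trivialComplex : Geometry.SimplicialComplex ℝ (Fin 1 → ℝ) where
  faces := {{0}}
  indep := by
    intro s hs
    rw [Set.mem_singleton_iff] at hs
    subst hs
    haveI : Subsingleton ↥({0} : Finset (Fin 1 → ℝ)) := by
      constructor
      rintro ⟨a, ha⟩ ⟨b, hb⟩
      rw [Finset.mem_singleton] at ha hb
      exact Subtype.ext (ha.trans hb.symm)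
    exact affineIndependent_of_subsingleton ℝ _
  isRelLowerSet_faces := by
    have not_empty_mem : (∅ : Finset (Fin 1 → ℝ)) ∉ ({{0}} : Set (Finset (Fin 1 → ℝ))) := by
      intro h
      rw [Set.mem_singleton_iff] at h
      exact absurd h.symm (Finset.singleton_ne_empty _)
    have down_closed : ∀ {s t : Finset (Fin 1 → ℝ)}, s ∈ ({{0}} : Set (Finset (Fin 1 → ℝ))) → t ⊆ s → t ≠ ∅ → t ∈ ({{0}} : Set (Finset (Fin 1 → ℝ))) := by
      intro s t hs hts htne
      rw [Set.mem_singleton_iff] at hs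
      subst hs
      rw [Set.mem_singleton_iff]
      have := Finset.subset_singleton_iff.1 hts
      tauto
    intro s hs
    exact ⟨Finset.nonempty_iff_ne_empty.2 (fun h => not_empty_mem (h ▸ hs)),
      fun u hts htne => down_closed hs hts htne.ne_empty⟩
  inter_subset_convexHull := by
    intro s t hs ht
    rw [Set.mem_singleton_iff] at hs ht
    subst hs; subst ht
    simp

theorem dimEps_widim_ineqs (X : Type u) [MetricSpace X] [CompactSpace X]
    (ε : ℝ) (hε : 0 < ε) :
    dimEps X ε ≤ widimEps X ε ∧ widimEps X ε ≤ 2 * dimEps X ε + 1 ∧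
      dimEps X ε ≤ coverDim X := by
  have part3 : dimEps X ε ≤ coverDim X := by
    apply sInf_le
    refine ⟨X, inferInstance, inferInstance, inferInstance, id, continuous_id, ?_, le_rfl⟩
    intro y
    have : (id ⁻¹' {y} : Set X) ⊆ {y} := by simp
    calc Metric.diam (id ⁻¹' {y} : Set X) ≤ Metric.diam ({y} : Set X) :=
          Metric.diam_mono this ((isCompact_univ.isBounded).subset (Set.subset_univ _))
      _ = 0 := Metric.diam_singleton
      _ < ε := hε
  have part1 : dimEps X ε ≤ widimEps X ε := by
    apply le_sInf
    rintro w ⟨N, K, hfin, hdim, f, hfc, hdiam⟩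
    apply sInf_le
    have hcomp : IsCompact K.space := by
      apply Set.Finite.isCompact_biUnion hfin
      intro s _
      exact (Finset.finite_toSet s).isCompact_convexHull ℝ
    haveI : CompactSpace ↥K.space := isCompact_iff_compactSpace.1 hcomp
    haveI : CompactSpace (ULift.{u} ↥K.space) :=
      (Homeomorph.ulift (X := ↥K.space)).symm.compactSpace
    haveI : TopologicalSpace.MetrizableSpace (ULift.{u} ↥K.space) :=
      (Homeomorph.ulift (X := ↥K.space)).isEmbedding.metrizableSpace
    refine ⟨ULift.{u} ↥K.space, inferInstance, inferInstance, inferInstance,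
      fun x => ULift.up (f x), continuous_uliftUp.comp hfc, ?_, ?_⟩
    · intro y
      have hpre : (fun x => ULift.up (f x)) ⁻¹' {y} = f ⁻¹' {y.down} := by
        ext x
        simp only [Set.mem_preimage, Set.mem_singleton_iff]
        constructor
        · intro h
          rw [← congrArg ULift.down h]
        · intro h
          rw [h]
      rw [hpre]
      exact hdiam y.down
    · exact le_trans (coverDim_le_of_homeomorph (Homeomorph.ulift (X := ↥K.space))) hdim
  have part2 : widimEps X ε ≤ 2 * dimEps X ε + 1 := by
    set S := {n : ENNReal | ∃ (Y : Type u) (_ : TopologicalSpace Y) (_ : CompactSpace Y)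
      (_ : TopologicalSpace.MetrizableSpace Y) (f : X → Y), Continuous f ∧
      (∀ y : Y, Metric.diam (f ⁻¹' {y}) < ε) ∧ coverDim Y ≤ n} with hSdef
    have hdS : dimEps X ε = sInf S := by unfold dimEps; rfl
    have key : ∀ m ∈ S, widimEps X ε ≤ 2 * m + 1 := by
      rintro m ⟨Y, _ts, _cs, _ms, f, hfc, hdiam, hdimY⟩
      rcases eq_top_or_lt_top m with rfl | hmtop
      · simp
      letI : MetricSpace Y := TopologicalSpace.metrizableSpaceMetric Y
      set n : ℕ := Nat.floor m.toReal with hndef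
      have hn_le_m : (n : ENNReal) ≤ m := by
        have h1 : ((n:ℝ)) ≤ m.toReal := Nat.floor_le ENNReal.toReal_nonneg
        calc (n : ENNReal) = ENNReal.ofReal (n:ℝ) := (ENNReal.ofReal_natCast n).symm
          _ ≤ ENNReal.ofReal m.toReal := ENNReal.ofReal_le_ofReal h1
          _ = m := ENNReal.ofReal_toReal hmtop.ne
      have hdimn : coverDim Y ≤ (n : ENNReal) := by
        refine iSup₂_le fun α hα => ?_
        have h1 : (coverD α : ENNReal) ≤ m :=
          le_trans (le_iSup₂ (f := fun α _ => (coverD α : ENNReal)) α hα) hdimY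
        have h2 : (coverD α : ℝ) ≤ m.toReal := by
          have := ENNReal.toReal_mono hmtop.ne h1
          simpa using this
        exact_mod_cast Nat.le_floor h2
      rcases isEmpty_or_nonempty X with hXe | hXne
      · -- X empty: use the trivial complex
        apply sInf_le
        refine ⟨1, trivialComplex, Set.finite_singleton _, ?_,
          fun x => (IsEmpty.elim hXe x), ?_, ?_⟩
        · have hc1 : coverDim ↥trivialComplex.space ≤ ((1:ℕ) : ENNReal) := by
            apply coverDim_compact_subset_le
            exact Set.Finite.isCompact_biUnion (Set.finite_singleton _)
              (fun s _ => (Finset.finite_toSet s).isCompact_convexHull ℝ)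
          refine hc1.trans ?_
          rw [Nat.cast_one]
          exact le_add_self
        · exact continuous_iff_continuousAt.2 fun x => (IsEmpty.elim hXe x)
        · intro p
          have h1 : ((fun x => (IsEmpty.elim hXe x : ↥trivialComplex.space)) ⁻¹' {p})
              = (∅ : Set X) := Set.eq_empty_of_isEmpty _
          rw [h1]
          simpa using hε
      · obtain ⟨K, hKfin, hKdim, g, hgc, hgdiam⟩ :=
          nerve_construction hfc hε hdiam n hdimn
        have h1 : widimEps X ε ≤ ((2*n+1 : ℕ) : ENNReal) :=
          sInf_le ⟨2*n+1, K, hKfin, hKdim, g, hgc, hgdiam⟩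
        refine h1.trans ?_
        push_cast
        exact add_le_add_left (mul_le_mul_right hn_le_m 2) 1
    rcases eq_top_or_lt_top (dimEps X ε) with htop | hlt
    · rw [htop]
      simp
    have hne : S.Nonempty := by
      rcases Set.eq_empty_or_nonempty S with h | h
      · exfalso
        rw [hdS, h] at hlt
        simp at hlt
      · exact h
    have hup : ∀ c, dimEps X ε < c → c ∈ S := by
      intro c hc
      rw [hdS] at hc
      obtain ⟨m', hmS, hmc⟩ := exists_lt_of_csInf_lt hne hc
      obtain ⟨Y, i1, i2, i3, ff, h1, h2, h3⟩ := hmS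
      exact ⟨Y, i1, i2, i3, ff, h1, h2, h3.trans hmc.le⟩
    apply ENNReal.le_of_forall_pos_le_add
    intro η hη h2top
    have hη2 : ((η:ENNReal)/2) ≠ 0 := by
      simp [ENNReal.div_eq_zero_iff, hη.ne']
    have hc : dimEps X ε < dimEps X ε + (η:ENNReal) / 2 :=
      ENNReal.lt_add_right hlt.ne hη2
    have hmem := hup _ hc
    have h2 : 2 * ((η : ENNReal) / 2) = η := by
      rw [mul_comm, ENNReal.div_mul_cancel (by norm_num) (by norm_num)]
    calc widimEps X ε ≤ 2 * (dimEps X ε + (η:ENNReal) / 2) + 1 := key _ hmem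
      _ = 2 * dimEps X ε + 2 * ((η:ENNReal) / 2) + 1 := by rw [mul_add]
      _ = 2 * dimEps X ε + 1 + η := by rw [h2]; ring
  exact ⟨part1, part2, part3⟩
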